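/- In the three-node cycle with positive susceptances, the sign of ∂p_12/∂β_23 equals the sign of p_23, the flow on the neighboring line (2,3). -/

import Mathlib

/-- Flow on line (1,2) of the three-node cycle as a function of the neighboring
susceptance `b = β₂₃`, with fixed `β₁₂, β₁₃, p₁, p₂`. -/
noncomputable def flow12neighbor (β12 β13 p1 p2 : ℝ) (b : ℝ) : ℝ :=
  β12 * (p1 * b - p2 * β13) / (β12 * β13 + β12 * b + β13 * b)

/-- The sign of `∂p₁₂/∂β₂₃` equals the sign of the flow `p₂₃` on the neighboring
line (2,3), where `p₂₃ = β₂₃ (p₂ β₁₃ - p₃ β₁₂)/D` with `p₃ = -(p₁+p₂)`. -/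
theorem three_node_neighbor_sensitivity_sign
    (β12 β13 β23 p1 p2 : ℝ)
    (h12 : 0 < β12) (h13 : 0 < β13) (h23 : 0 < β23) :
    Real.sign (deriv (flow12neighbor β12 β13 p1 p2) β23)
      = Real.sign (β23 * (p2 * β13 - (-(p1 + p2)) * β12) /
          (β12 * β13 + β12 * β23 + β13 * β23)) := by
  have hDpos : 0 < β12 * β13 + β12 * β23 + β13 * β23 := by positivity
  have hD : β12 * β13 + β12 * β23 + β13 * β23 ≠ 0 := ne_of_gt hDpos
  have hnum : HasDerivAt (fun b : ℝ => β12 * (p1 * b - p2 * β13)) (β12 * p1) β23 := by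
    simpa using (((hasDerivAt_id β23).const_mul p1).sub_const (p2 * β13)).const_mul β12
  have hden : HasDerivAt (fun b : ℝ => β12 * β13 + β12 * b + β13 * b) (β12 + β13) β23 := by
    simpa [Pi.add_def] using ((((hasDerivAt_id β23).const_mul β12).const_add (β12 * β13)).add
      ((hasDerivAt_id β23).const_mul β13))
  have hder : HasDerivAt (flow12neighbor β12 β13 p1 p2)
      ((β12 * p1 * (β12 * β13 + β12 * β23 + β13 * β23)
        - β12 * (p1 * β23 - p2 * β13) * (β12 + β13))
        / (β12 * β13 + β12 * β23 + β13 * β23) ^ 2) β23 := hnum.div hden hD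
  rw [hder.deriv]
  set K := β12 * (p1 + p2) + β13 * p2 with hK
  have hnum1 : β12 * p1 * (β12 * β13 + β12 * β23 + β13 * β23)
        - β12 * (p1 * β23 - p2 * β13) * (β12 + β13) = β12 * β13 * K := by ring
  have hnum2 : β23 * (p2 * β13 - (-(p1 + p2)) * β12) = β23 * K := by ring
  rw [hnum1, hnum2]
  rcases lt_trichotomy K 0 with hKlt | hKeq | hKgt
  · rw [Real.sign_of_neg (div_neg_of_neg_of_pos (mul_neg_of_pos_of_neg (by positivity) hKlt) (by positivity)),
      Real.sign_of_neg (div_neg_of_neg_of_pos (mul_neg_of_pos_of_neg h23 hKlt) hDpos)]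
  · rw [hKeq]; simp
  · rw [Real.sign_of_pos (div_pos (mul_pos (by positivity) hKgt) (by positivity)),
      Real.sign_of_pos (div_pos (mul_pos h23 hKgt) hDpos)]
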